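/- The following four identities hold: (1) E*_0 E_d E*_d E_0 = (φ_1 φ_2 ⋯ φ_d / (τ_d(θ_d) τ*_d(θ*_d))) E*_0 E_0; (2) E*_0 E_0 E*_d E_d = (ϕ_1 ϕ_2 ⋯ ϕ_d / (η_d(θ_0) τ*_d(θ*_d))) E*_0 E_d; (3) E*_d E_d E*_0 E_0 = (ϕ_1 ϕ_2 ⋯ ϕ_d / (τ_d(θ_d) η*_d(θ*_0))) E*_d E_0; (4) E*_d E_0 E*_0 E_d = (φ_1 φ_2 ⋯ φ_d / (η_d(θ_0) η*_d(θ*_0))) E*_d E_d. Here the scalars τ_d(θ_d), η_d(θ_0), τ*_d(θ*_d), η*_d(θ*_0) are nonzero since θ_0,…,θ_d are mutually distinct and θ*_0,…,θ*_d are mutually distinct. -/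

import Mathlib

open Polynomial Matrix Finset

noncomputable section

/-- The lower bidiagonal matrix with diagonal entries `θ 0, …, θ d` and
subdiagonal entries `1`. -/
def matA {K : Type*} [Field K] (d : ℕ) (θ : ℕ → K) :
    Matrix (Fin (d + 1)) (Fin (d + 1)) K :=
  Matrix.of fun i j =>
    if (i : ℕ) = (j : ℕ) then θ (i : ℕ)
    else if (i : ℕ) = (j : ℕ) + 1 then 1 else 0

/-- The upper bidiagonal matrix with diagonal entries `θs 0, …, θs d` and
superdiagonal entries `φ 1, …, φ d` (the `(i-1,i)`-entry is `φ i`). -/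
def matAs {K : Type*} [Field K] (d : ℕ) (θs φ : ℕ → K) :
    Matrix (Fin (d + 1)) (Fin (d + 1)) K :=
  Matrix.of fun i j =>
    if (i : ℕ) = (j : ℕ) then θs (i : ℕ)
    else if (j : ℕ) = (i : ℕ) + 1 then φ (j : ℕ) else 0

/-- The primitive idempotent `E_i = ∏_{j ≠ i} (M - θ_j I)/(θ_i - θ_j)` of a matrix `M`
with eigenvalues `θ 0, …, θ d`. -/
def primIdem {K : Type*} [Field K] (d : ℕ) (θ : ℕ → K)
    (M : Matrix (Fin (d + 1)) (Fin (d + 1)) K) (i : ℕ) :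
    Matrix (Fin (d + 1)) (Fin (d + 1)) K :=
  Polynomial.aeval M (∏ j ∈ (Finset.range (d + 1)).erase i,
    (Polynomial.C ((θ i - θ j)⁻¹) * (Polynomial.X - Polynomial.C (θ j))))

/-- `τ_i(λ) = (λ - θ_0)(λ - θ_1)⋯(λ - θ_{i-1})`. -/
def tauPoly {K : Type*} [Field K] (θ : ℕ → K) (i : ℕ) : Polynomial K :=
  ∏ k ∈ Finset.range i, (Polynomial.X - Polynomial.C (θ k))

/-- `η_i(λ) = (λ - θ_d)(λ - θ_{d-1})⋯(λ - θ_{d-i+1})`. -/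
def etaPoly {K : Type*} [Field K] (d : ℕ) (θ : ℕ → K) (i : ℕ) : Polynomial K :=
  ∏ k ∈ Finset.range i, (Polynomial.X - Polynomial.C (θ (d - k)))

namespace FourIdem
variable {K : Type*} [Field K]

def lbd (d : ℕ) (θ s : ℕ → K) : Matrix (Fin (d+1)) (Fin (d+1)) K :=
  Matrix.of fun i j => if (i:ℕ) = (j:ℕ) then θ (i:ℕ) else if (i:ℕ) = (j:ℕ)+1 then s (i:ℕ) else 0

variable {d : ℕ} {θ s : ℕ → K}

lemma lbd_apply (i j : Fin (d+1)) :
    lbd d θ s i j = if (i:ℕ) = (j:ℕ) then θ (i:ℕ) else if (i:ℕ) = (j:ℕ)+1 then s (i:ℕ) else 0 :=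
  rfl

lemma lbd_apply_ne {i j : Fin (d+1)} (h1 : (i:ℕ) ≠ (j:ℕ)) (h2 : (i:ℕ) ≠ (j:ℕ)+1) :
    lbd d θ s i j = 0 := by rw [lbd_apply, if_neg h1, if_neg h2]

lemma lbd_mul_entry (N : Matrix (Fin (d+1)) (Fin (d+1)) K) (i j : Fin (d+1)) :
    (lbd d θ s * N) i j = θ (i:ℕ) * N i j +
      (if h : 0 < (i:ℕ) then s (i:ℕ) * N ⟨(i:ℕ)-1, by omega⟩ j else 0) := by
  rw [Matrix.mul_apply]
  by_cases h : 0 < (i:ℕ)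
  · rw [dif_pos h]
    set i' : Fin (d+1) := ⟨(i:ℕ)-1, by omega⟩ with hi'
    have hvi' : (i':ℕ) = (i:ℕ)-1 := rfl
    have hne : i ≠ i' := by
      intro hc; apply_fun (Fin.val) at hc; omega
    have hsub : ({i, i'} : Finset (Fin (d+1))) ⊆ univ := subset_univ _
    rw [← Finset.sum_subset hsub, Finset.sum_pair hne]
    · have h1 : lbd d θ s i i = θ (i:ℕ) := by rw [lbd_apply, if_pos rfl]
      have h2 : lbd d θ s i i' = s (i:ℕ) := by
        rw [lbd_apply, if_neg (by omega), if_pos (by omega)]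
      rw [h1, h2]
    · intro k _ hk
      simp only [Finset.mem_insert, Finset.mem_singleton, not_or] at hk
      have h1 : (i:ℕ) ≠ (k:ℕ) := fun hc => hk.1 (Fin.ext hc.symm)
      have h2 : (i:ℕ) ≠ (k:ℕ)+1 := by
        intro hc
        exact hk.2 (Fin.ext (by omega))
      rw [lbd_apply_ne h1 h2, zero_mul]
  · rw [dif_neg h]
    rw [Finset.sum_eq_single i]
    · rw [lbd_apply, if_pos rfl, add_zero]
    · intro k _ hk
      have h1 : (i:ℕ) ≠ (k:ℕ) := fun hc => hk (Fin.ext hc).symm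
      have h2 : (i:ℕ) ≠ (k:ℕ)+1 := by omega
      rw [lbd_apply_ne h1 h2, zero_mul]
    · intro hc; exact absurd (Finset.mem_univ i) hc

lemma mul_lbd_entry (N : Matrix (Fin (d+1)) (Fin (d+1)) K) (i j : Fin (d+1)) :
    (N * lbd d θ s) i j = N i j * θ (j:ℕ) +
      (if h : (j:ℕ) < d then N i ⟨(j:ℕ)+1, by omega⟩ * s ((j:ℕ)+1) else 0) := by
  rw [Matrix.mul_apply]
  by_cases h : (j:ℕ) < d
  · rw [dif_pos h]
    set j' : Fin (d+1) := ⟨(j:ℕ)+1, by omega⟩ with hj'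
    have hvj' : (j':ℕ) = (j:ℕ)+1 := rfl
    have hne : j ≠ j' := by
      intro hc; apply_fun (Fin.val) at hc; omega
    have hsub : ({j, j'} : Finset (Fin (d+1))) ⊆ univ := subset_univ _
    rw [← Finset.sum_subset hsub, Finset.sum_pair hne]
    · have h1 : lbd d θ s j j = θ (j:ℕ) := by rw [lbd_apply, if_pos rfl]
      have h2 : lbd d θ s j' j = s ((j:ℕ)+1) := by
        rw [lbd_apply, if_neg (by omega), if_pos (by omega), hvj']
      rw [h1, h2]
    · intro k _ hk
      simp only [Finset.mem_insert, Finset.mem_singleton, not_or] at hk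
      have h1 : (k:ℕ) ≠ (j:ℕ) := fun hc => hk.1 (Fin.ext hc)
      have h2 : (k:ℕ) ≠ (j:ℕ)+1 := by
        intro hc; exact hk.2 (Fin.ext (by omega))
      rw [lbd_apply_ne h1 h2, mul_zero]
  · rw [dif_neg h]
    rw [Finset.sum_eq_single j]
    · rw [lbd_apply, if_pos rfl, add_zero]
    · intro k _ hk
      have h1 : (k:ℕ) ≠ (j:ℕ) := fun hc => hk (Fin.ext hc)
      have h2 : (k:ℕ) ≠ (j:ℕ)+1 := by omega
      rw [lbd_apply_ne h1 h2, mul_zero]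
    · intro hc; exact absurd (Finset.mem_univ j) hc

variable {K : Type*} [Field K] {d : ℕ} {θ s : ℕ → K}

lemma lbd_ann_aux : ∀ m, m ≤ d+1 → ∀ i j : Fin (d+1), (i:ℕ) < m →
    (aeval (lbd d θ s) (∏ k ∈ range m, (X - C (θ k)))) i j = 0 := by
  intro m
  induction m with
  | zero => intro _ i j h; omega
  | succ m IH =>
    intro hm i j hi
    have hprod : (∏ k ∈ range (m+1), (X - C (θ k)))
        = (X - C (θ m)) * ∏ k ∈ range m, (X - C (θ k)) := by
      rw [Finset.prod_range_succ, mul_comm]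
    rw [hprod, _root_.map_mul]
    set N := aeval (lbd d θ s) (∏ k ∈ range m, (X - C (θ k))) with hN
    have haev : (aeval (lbd d θ s)) (X - C (θ m)) = lbd d θ s - θ m • 1 := by
      rw [map_sub, aeval_X, aeval_C, Algebra.algebraMap_eq_smul_one]
    rw [haev, sub_mul, Matrix.sub_apply, Matrix.smul_mul, one_mul, Matrix.smul_apply,
      lbd_mul_entry, smul_eq_mul]
    rcases Nat.lt_or_ge (i:ℕ) m with h | h
    · rw [IH (by omega) i j h]
      have : (if h : 0 < (i:ℕ) then s (i:ℕ) * N ⟨(i:ℕ)-1, by omega⟩ j else 0) = 0 := by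
        by_cases h0 : 0 < (i:ℕ)
        · rw [dif_pos h0, IH (by omega) _ j (by simp; omega), mul_zero]
        · rw [dif_neg h0]
      rw [this]; ring
    · have hieq : (i:ℕ) = m := by omega
      have : (if h : 0 < (i:ℕ) then s (i:ℕ) * N ⟨(i:ℕ)-1, by omega⟩ j else 0) = 0 := by
        by_cases h0 : 0 < (i:ℕ)
        · rw [dif_pos h0, IH (by omega) _ j (by simp; omega), mul_zero]
        · rw [dif_neg h0]
      rw [this, hieq]; ring

lemma lbd_ann : aeval (lbd d θ s) (∏ k ∈ range (d+1), (X - C (θ k))) = 0 :=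
  Matrix.ext fun i j => lbd_ann_aux (d+1) le_rfl i j i.isLt

lemma lbd_pow_entry (n : ℕ) :
    (∀ i j : Fin (d+1), (i:ℕ) < (j:ℕ) → ((lbd d θ s)^n) i j = 0)
      ∧ (∀ i : Fin (d+1), ((lbd d θ s)^n) i i = θ (i:ℕ) ^ n) := by
  induction n with
  | zero =>
    constructor
    · intro i j h
      simp [Matrix.one_apply, Fin.ext_iff]; omega
    · intro i; simp
  | succ n IH =>
    constructor
    · intro i j h
      rw [pow_succ, mul_lbd_entry, IH.1 i j h]
      have : (if hh : (j:ℕ) < d then ((lbd d θ s)^n) i ⟨(j:ℕ)+1, by omega⟩ * s ((j:ℕ)+1) else 0) = 0 := by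
        by_cases hh : (j:ℕ) < d
        · rw [dif_pos hh, IH.1 i _ (by simp; omega), zero_mul]
        · rw [dif_neg hh]
      rw [this]; ring
    · intro i
      rw [pow_succ, mul_lbd_entry, IH.2 i]
      have : (if hh : (i:ℕ) < d then ((lbd d θ s)^n) i ⟨(i:ℕ)+1, by omega⟩ * s ((i:ℕ)+1) else 0) = 0 := by
        by_cases hh : (i:ℕ) < d
        · rw [dif_pos hh, IH.1 i _ (by simp), zero_mul]
        · rw [dif_neg hh]
      rw [this]; ring

lemma aeval_lbd_diag (p : K[X]) (i : Fin (d+1)) :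
    (aeval (lbd d θ s) p) i i = p.eval (θ (i:ℕ)) := by
  rw [aeval_eq_sum_range, eval_eq_sum_range]
  rw [Matrix.sum_apply]
  refine Finset.sum_congr rfl fun k _ => ?_
  rw [Matrix.smul_apply, (lbd_pow_entry k).2 i, smul_eq_mul]

def uvec (θ s : ℕ → K) (i : ℕ) : K := ∏ k ∈ Icc 1 i, (s k * (θ 0 - θ k)⁻¹)

def wvec (d : ℕ) (θ s : ℕ → K) (j : ℕ) : K := ∏ k ∈ range j, ((θ d - θ k) * (s (k+1))⁻¹)

lemma uvec_succ (n : ℕ) : uvec θ s (n+1) = uvec θ s n * (s (n+1) * (θ 0 - θ (n+1))⁻¹) := by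
  rw [uvec, uvec, ← Finset.prod_Icc_succ_top (by omega)]

lemma wvec_succ (n : ℕ) : wvec d θ s (n+1) = wvec d θ s n * ((θ d - θ n) * (s (n+1))⁻¹) := by
  rw [wvec, wvec, Finset.prod_range_succ]

section kernels
variable (hθ : ∀ i ≤ d, ∀ j ≤ d, θ i = θ j → i = j)
include hθ

lemma theta_ne {i j : ℕ} (hi : i ≤ d) (hj : j ≤ d) (hij : i ≠ j) : θ i - θ j ≠ 0 := by
  intro hc
  exact hij (hθ i hi j hj (sub_eq_zero.mp hc))

lemma col0 {N : Matrix (Fin (d+1)) (Fin (d+1)) K}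
    (hN : (lbd d θ s - θ 0 • 1) * N = 0) (n : ℕ) (hn : n < d+1) (j : Fin (d+1)) :
    N ⟨n, hn⟩ j = uvec θ s n * N ⟨0, Nat.succ_pos d⟩ j := by
  have hmul : lbd d θ s * N = θ 0 • N := by
    rw [sub_mul, Matrix.smul_mul, one_mul] at hN
    exact sub_eq_zero.mp hN
  induction n with
  | zero => simp [uvec]
  | succ n IHn =>
    have eqn := congrFun (congrFun hmul ⟨n+1, hn⟩) j
    rw [lbd_mul_entry, Matrix.smul_apply, smul_eq_mul, dif_pos (by simp)] at eqn
    have hidx : (⟨(((⟨n+1, hn⟩ : Fin (d+1)):ℕ))-1, by omega⟩ : Fin (d+1)) = ⟨n, by omega⟩ := by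
      apply Fin.ext; simp
    rw [hidx] at eqn
    have hne : θ 0 - θ (n+1) ≠ 0 := theta_ne hθ (by omega) (by omega) (by omega)
    have key : (θ 0 - θ (n+1)) * N ⟨n+1, hn⟩ j = s (n+1) * N ⟨n, by omega⟩ j := by
      simp only [Fin.val_mk] at eqn; linear_combination -eqn
    calc N ⟨n+1, hn⟩ j = (θ 0 - θ (n+1))⁻¹ * ((θ 0 - θ (n+1)) * N ⟨n+1, hn⟩ j) := by
          rw [inv_mul_cancel_left₀ hne]
      _ = (θ 0 - θ (n+1))⁻¹ * (s (n+1) * N ⟨n, by omega⟩ j) := by rw [key]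
      _ = uvec θ s (n+1) * N ⟨0, Nat.succ_pos d⟩ j := by
          rw [IHn (by omega), uvec_succ]; ring

lemma col_d {N : Matrix (Fin (d+1)) (Fin (d+1)) K}
    (hN : (lbd d θ s - θ d • 1) * N = 0) (n : ℕ) (hn : n < d+1) (hnd : n ≠ d) (j : Fin (d+1)) :
    N ⟨n, hn⟩ j = 0 := by
  have hmul : lbd d θ s * N = θ d • N := by
    rw [sub_mul, Matrix.smul_mul, one_mul] at hN
    exact sub_eq_zero.mp hN
  induction n with
  | zero =>
    have eqn := congrFun (congrFun hmul ⟨0, hn⟩) j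
    rw [lbd_mul_entry, Matrix.smul_apply, smul_eq_mul, dif_neg (by simp)] at eqn
    simp only [Fin.val_mk, add_zero] at eqn
    have hne : θ 0 - θ d ≠ 0 := theta_ne hθ (by omega) le_rfl (by omega)
    have : (θ 0 - θ d) * N ⟨0, hn⟩ j = 0 := by linear_combination eqn
    exact (mul_eq_zero.mp this).resolve_left hne
  | succ n IHn =>
    have eqn := congrFun (congrFun hmul ⟨n+1, hn⟩) j
    rw [lbd_mul_entry, Matrix.smul_apply, smul_eq_mul, dif_pos (by simp)] at eqn
    have hidx : (⟨(((⟨n+1, hn⟩ : Fin (d+1)):ℕ))-1, by omega⟩ : Fin (d+1)) = ⟨n, by omega⟩ := by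
      apply Fin.ext; simp
    rw [hidx, IHn (by omega) (by omega), mul_zero, add_zero] at eqn
    simp only [Fin.val_mk] at eqn
    have hne : θ (n+1) - θ d ≠ 0 := theta_ne hθ (by omega) le_rfl (by omega)
    have : (θ (n+1) - θ d) * N ⟨n+1, hn⟩ j = 0 := by linear_combination eqn
    exact (mul_eq_zero.mp this).resolve_left hne

lemma row0 (hs : ∀ k, 1 ≤ k → k ≤ d → s k ≠ 0) {N : Matrix (Fin (d+1)) (Fin (d+1)) K}
    (hN : N * (lbd d θ s - θ 0 • 1) = 0) (i : Fin (d+1)) (n : ℕ) (hn : n < d+1) (hn0 : n ≠ 0) :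
    N i ⟨n, hn⟩ = 0 := by
  have hmul : N * lbd d θ s = θ 0 • N := by
    rw [Matrix.mul_sub, Matrix.mul_smul, mul_one] at hN
    exact sub_eq_zero.mp hN
  induction n with
  | zero => omega
  | succ n IHn =>
    have eqn := congrFun (congrFun hmul i) ⟨n, by omega⟩
    rw [mul_lbd_entry, Matrix.smul_apply, smul_eq_mul, dif_pos (by simp; omega)] at eqn
    simp only [Fin.val_mk] at eqn
    have hidx : (⟨n+1, by omega⟩ : Fin (d+1)) = ⟨n+1, hn⟩ := rfl
    rcases Nat.eq_zero_or_pos n with h0 | hpos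
    · subst h0
      have : N i ⟨1, hn⟩ * s 1 = 0 := by linear_combination eqn
      exact (mul_eq_zero.mp this).resolve_right (hs 1 le_rfl (by omega))
    · rw [IHn (by omega) (by omega)] at eqn
      have : N i ⟨n+1, by omega⟩ * s (n+1) = 0 := by linear_combination eqn
      exact (mul_eq_zero.mp this).resolve_right (hs (n+1) (by omega) (by omega))

lemma row_d (hs : ∀ k, 1 ≤ k → k ≤ d → s k ≠ 0) {N : Matrix (Fin (d+1)) (Fin (d+1)) K}
    (hN : N * (lbd d θ s - θ d • 1) = 0) (i : Fin (d+1)) (n : ℕ) (hn : n < d+1) :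
    N i ⟨n, hn⟩ = N i ⟨0, Nat.succ_pos d⟩ * wvec d θ s n := by
  have hmul : N * lbd d θ s = θ d • N := by
    rw [Matrix.mul_sub, Matrix.mul_smul, mul_one] at hN
    exact sub_eq_zero.mp hN
  induction n with
  | zero => simp [wvec]
  | succ n IHn =>
    have eqn := congrFun (congrFun hmul i) ⟨n, by omega⟩
    rw [mul_lbd_entry, Matrix.smul_apply, smul_eq_mul, dif_pos (by simp; omega)] at eqn
    simp only [Fin.val_mk] at eqn
    rw [IHn (by omega)] at eqn
    have hsne : s (n+1) ≠ 0 := hs (n+1) (by omega) (by omega)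
    have key : N i ⟨n+1, by omega⟩ * s (n+1) = N i ⟨0, Nat.succ_pos d⟩ * wvec d θ s n * (θ d - θ n) := by
      linear_combination eqn
    have : N i ⟨n+1, hn⟩ = N i ⟨n+1, by omega⟩ := rfl
    rw [this]
    calc N i ⟨n+1, by omega⟩
        = (N i ⟨n+1, by omega⟩ * s (n+1)) * (s (n+1))⁻¹ := by
          rw [mul_assoc, mul_inv_cancel₀ hsne, mul_one]
      _ = N i ⟨0, Nat.succ_pos d⟩ * wvec d θ s (n+1) := by
          rw [key, wvec_succ]; ring

end kernels

def outer {K : Type*} [Field K] {d : ℕ} (a b : Fin (d+1) → K) : Matrix (Fin (d+1)) (Fin (d+1)) K :=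
  Matrix.of fun i j => a i * b j

section primforms
variable (hθ : ∀ i ≤ d, ∀ j ≤ d, θ i = θ j → i = j)
include hθ

lemma prim_poly_eval {i₀ : ℕ} (hi₀ : i₀ ≤ d) :
    (∏ j ∈ (Finset.range (d + 1)).erase i₀,
      (C ((θ i₀ - θ j)⁻¹) * (X - C (θ j)))).eval (θ i₀) = 1 := by
  rw [eval_prod]
  apply Finset.prod_eq_one
  intro j hj
  rw [Finset.mem_erase, Finset.mem_range] at hj
  rw [eval_mul, eval_C, eval_sub, eval_X, eval_C]
  exact inv_mul_cancel₀ (theta_ne hθ hi₀ (by omega) (Ne.symm hj.1))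

omit hθ in
lemma prim_poly_mul {i₀ : ℕ} (hi₀ : i₀ ≤ d) :
    (X - C (θ i₀)) * ∏ j ∈ (Finset.range (d + 1)).erase i₀,
        (C ((θ i₀ - θ j)⁻¹) * (X - C (θ j)))
      = C (∏ j ∈ (Finset.range (d + 1)).erase i₀, (θ i₀ - θ j)⁻¹)
        * ∏ j ∈ Finset.range (d + 1), (X - C (θ j)) := by
  have hmem : i₀ ∈ Finset.range (d+1) := Finset.mem_range.mpr (by omega)
  rw [Finset.prod_mul_distrib, ← map_prod,
    ← Finset.mul_prod_erase (Finset.range (d+1)) (fun j => X - C (θ j)) hmem]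
  ring

omit hθ in
lemma prim_left (i₀ : ℕ) (hi₀ : i₀ ≤ d) :
    (lbd d θ s - θ i₀ • 1) * primIdem d θ (lbd d θ s) i₀ = 0 := by
  have h1 : lbd d θ s - θ i₀ • 1 = aeval (lbd d θ s) (X - C (θ i₀)) := by
    rw [map_sub, aeval_X, aeval_C, Algebra.algebraMap_eq_smul_one]
  rw [h1, primIdem, ← _root_.map_mul, prim_poly_mul hi₀, _root_.map_mul, lbd_ann, mul_zero]

omit hθ in
lemma prim_right (i₀ : ℕ) (hi₀ : i₀ ≤ d) :
    primIdem d θ (lbd d θ s) i₀ * (lbd d θ s - θ i₀ • 1) = 0 := by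
  have h1 : lbd d θ s - θ i₀ • 1 = aeval (lbd d θ s) (X - C (θ i₀)) := by
    rw [map_sub, aeval_X, aeval_C, Algebra.algebraMap_eq_smul_one]
  rw [h1, primIdem, ← _root_.map_mul, mul_comm, prim_poly_mul hi₀, _root_.map_mul, lbd_ann,
    mul_zero]

lemma prim_diag (i₀ : ℕ) (hi₀ : i₀ < d+1) :
    primIdem d θ (lbd d θ s) i₀ ⟨i₀, hi₀⟩ ⟨i₀, hi₀⟩ = 1 := by
  rw [primIdem, aeval_lbd_diag, Fin.val_mk, prim_poly_eval hθ (by omega)]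

lemma primIdem_lbd_zero (hs : ∀ k, 1 ≤ k → k ≤ d → s k ≠ 0) :
    primIdem d θ (lbd d θ s) 0
      = outer (fun i => uvec θ s (i:ℕ)) (fun j => if (j:ℕ) = 0 then 1 else 0) := by
  ext i j
  rw [outer, Matrix.of_apply]
  by_cases hj : (j:ℕ) = 0
  · have hj' : j = ⟨0, Nat.succ_pos d⟩ := Fin.ext hj
    rw [if_pos hj, mul_one, hj']
    have h1 : primIdem d θ (lbd d θ s) 0 i ⟨0, Nat.succ_pos d⟩
        = primIdem d θ (lbd d θ s) 0 ⟨(i:ℕ), i.isLt⟩ ⟨0, Nat.succ_pos d⟩ := by congr 1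
    rw [h1, col0 hθ (prim_left 0 (by omega)) (i:ℕ) i.isLt, prim_diag hθ 0 (Nat.succ_pos d),
      mul_one]
  · rw [if_neg hj, mul_zero]
    have h1 : primIdem d θ (lbd d θ s) 0 i j
        = primIdem d θ (lbd d θ s) 0 i ⟨(j:ℕ), j.isLt⟩ := by congr 1
    rw [h1]
    exact row0 hθ hs (prim_right 0 (by omega)) i (j:ℕ) j.isLt hj

lemma primIdem_lbd_d (hs : ∀ k, 1 ≤ k → k ≤ d → s k ≠ 0) :
    primIdem d θ (lbd d θ s) d
      = outer (fun i => if (i:ℕ) = d then 1 else 0)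
          (fun j => wvec d θ s (j:ℕ) * (wvec d θ s d)⁻¹) := by
  have hd : d < d+1 := by omega
  have hE0 : primIdem d θ (lbd d θ s) d ⟨d, hd⟩ ⟨0, Nat.succ_pos d⟩ = (wvec d θ s d)⁻¹ := by
    have h2 := row_d hθ hs (prim_right d le_rfl) (⟨d, hd⟩ : Fin (d+1)) d hd
    rw [prim_diag hθ d hd] at h2
    exact (inv_eq_of_mul_eq_one_left h2.symm).symm
  ext i j
  rw [outer, Matrix.of_apply]
  by_cases hi : (i:ℕ) = d
  · have hi' : i = ⟨d, hd⟩ := Fin.ext hi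
    rw [if_pos hi, one_mul, hi']
    have h1 : primIdem d θ (lbd d θ s) d ⟨d, hd⟩ j
        = primIdem d θ (lbd d θ s) d ⟨d, hd⟩ ⟨(j:ℕ), j.isLt⟩ := by congr 1
    rw [h1, row_d hθ hs (prim_right d le_rfl) _ (j:ℕ) j.isLt, hE0, mul_comm]
  · rw [if_neg hi, zero_mul]
    have h1 : primIdem d θ (lbd d θ s) d i j
        = primIdem d θ (lbd d θ s) d ⟨(i:ℕ), i.isLt⟩ j := by congr 1
    rw [h1]
    exact col_d hθ (prim_left d le_rfl) (i:ℕ) i.isLt hi j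

end primforms

lemma aeval_transpose {n : ℕ} (M : Matrix (Fin n) (Fin n) K) (p : K[X]) :
    aeval Mᵀ p = (aeval M p)ᵀ := by
  induction p using Polynomial.induction_on' with
  | add p q hp hq => rw [map_add, map_add, hp, hq, Matrix.transpose_add]
  | monomial n a =>
    rw [aeval_monomial, aeval_monomial, ← Algebra.smul_def, ← Algebra.smul_def,
      Matrix.transpose_smul, Matrix.transpose_pow]

lemma matA_eq_lbd : matA d θ = lbd d θ (fun _ => 1) := rfl

lemma matAs_eq_lbd (θs φ : ℕ → K) : matAs d θs φ = (lbd d θs φ)ᵀ := by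
  ext i j
  show (if (i:ℕ) = (j:ℕ) then θs (i:ℕ) else if (j:ℕ) = (i:ℕ)+1 then φ (j:ℕ) else 0)
    = (if (j:ℕ) = (i:ℕ) then θs (j:ℕ) else if (j:ℕ) = (i:ℕ)+1 then φ (j:ℕ) else 0)
  by_cases h1 : (i:ℕ) = (j:ℕ)
  · rw [if_pos h1, if_pos h1.symm, h1]
  · rw [if_neg h1, if_neg (Ne.symm h1)]

lemma primIdem_transpose {θ' : ℕ → K} (M : Matrix (Fin (d+1)) (Fin (d+1)) K) (i : ℕ) :
    primIdem d θ' Mᵀ i = (primIdem d θ' M i)ᵀ := aeval_transpose M _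

lemma primIdem_flip {M : Matrix (Fin (d+1)) (Fin (d+1)) K} {i₀ : ℕ} (hi₀ : i₀ ≤ d) :
    primIdem d θ M i₀ = primIdem d (fun k => θ (d - k)) M (d - i₀) := by
  unfold primIdem
  congr 1
  refine Finset.prod_nbij' (fun j => d - j) (fun j => d - j) ?_ ?_ ?_ ?_ ?_
  · intro a ha
    rw [Finset.mem_erase, Finset.mem_range] at ha
    rw [Finset.mem_erase, Finset.mem_range]
    omega
  · intro a ha
    rw [Finset.mem_erase, Finset.mem_range] at ha
    rw [Finset.mem_erase, Finset.mem_range]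
    omega
  · intro a ha; rw [Finset.mem_erase, Finset.mem_range] at ha; omega
  · intro a ha; rw [Finset.mem_erase, Finset.mem_range] at ha; omega
  · intro a ha
    rw [Finset.mem_erase, Finset.mem_range] at ha
    dsimp only
    have h1 : d - (d - i₀) = i₀ := by omega
    have h2 : d - (d - a) = a := by omega
    rw [h1, h2]

lemma outer_mul (a b c e : Fin (d+1) → K) :
    outer a b * outer c e = (∑ k, b k * c k) • outer a e := by
  ext i j
  rw [Matrix.mul_apply, Matrix.smul_apply, smul_eq_mul]
  show (∑ k, a i * b k * (c k * e j)) = (∑ k, b k * c k) * (a i * e j)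
  rw [Finset.sum_mul]
  exact Finset.sum_congr rfl fun k _ => by ring

lemma outer_transpose (a b : Fin (d+1) → K) : (outer a b)ᵀ = outer b a := by
  ext i j; show a j * b i = b i * a j; ring

lemma trace_outer (a b : Fin (d+1) → K) : Matrix.trace (outer a b) = ∑ k, a k * b k := rfl

lemma sum_delta_mul (c : Fin (d+1) → K) (n : ℕ) (hn : n < d+1) :
    ∑ k : Fin (d+1), (if (k:ℕ) = n then (1:K) else 0) * c k = c ⟨n, hn⟩ := by
  rw [Finset.sum_eq_single (⟨n, hn⟩ : Fin (d+1))]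
  · rw [if_pos rfl, one_mul]
  · intro k _ hk
    rw [if_neg (fun hc => hk (Fin.ext hc)), zero_mul]
  · intro hc; exact absurd (Finset.mem_univ _) hc

lemma sum_mul_delta (c : Fin (d+1) → K) (n : ℕ) (hn : n < d+1) :
    ∑ k : Fin (d+1), c k * (if (k:ℕ) = n then (1:K) else 0) = c ⟨n, hn⟩ := by
  rw [← sum_delta_mul c n hn]
  exact Finset.sum_congr rfl fun k _ => by ring

section conj
variable {P Q : Matrix (Fin (d+1)) (Fin (d+1)) K}

lemma conj_pow (hPQ : P * Q = 1) (hQP : Q * P = 1)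
    (M : Matrix (Fin (d+1)) (Fin (d+1)) K) (n : ℕ) :
    (P * M * Q) ^ n = P * M ^ n * Q := by
  induction n with
  | zero => rw [pow_zero, pow_zero, mul_one, hPQ]
  | succ n IH =>
    rw [pow_succ, pow_succ, IH]
    calc P * M ^ n * Q * (P * M * Q) = P * M ^ n * (Q * P) * M * Q := by
          simp only [Matrix.mul_assoc]
      _ = P * (M ^ n * M) * Q := by rw [hQP, Matrix.mul_one]; simp only [Matrix.mul_assoc]

lemma aeval_conj (hPQ : P * Q = 1) (hQP : Q * P = 1)
    (M : Matrix (Fin (d+1)) (Fin (d+1)) K) (p : K[X]) :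
    aeval (P * M * Q) p = P * aeval M p * Q := by
  induction p using Polynomial.induction_on' with
  | add p q hp hq => rw [map_add, map_add, hp, hq, Matrix.mul_add, Matrix.add_mul]
  | monomial n a =>
    rw [aeval_monomial, aeval_monomial, ← Algebra.smul_def, ← Algebra.smul_def,
      conj_pow hPQ hQP, Matrix.mul_smul, Matrix.smul_mul]

lemma primIdem_conj (hPQ : P * Q = 1) (hQP : Q * P = 1) {θ' : ℕ → K}
    (M : Matrix (Fin (d+1)) (Fin (d+1)) K) (i : ℕ) :
    primIdem d θ' (P * M * Q) i = P * primIdem d θ' M i * Q :=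
  aeval_conj hPQ hQP M _

lemma trace_conj_mul (hQP : Q * P = 1)
    (X Y : Matrix (Fin (d+1)) (Fin (d+1)) K) :
    Matrix.trace ((P * X * Q) * (P * Y * Q)) = Matrix.trace (X * Y) := by
  have h1 : (P * X * Q) * (P * Y * Q) = P * (X * Y) * Q := by
    calc (P * X * Q) * (P * Y * Q) = P * X * (Q * P) * Y * Q := by simp only [Matrix.mul_assoc]
      _ = P * (X * Y) * Q := by rw [hQP, Matrix.mul_one]; simp only [Matrix.mul_assoc]
  rw [h1, Matrix.trace_mul_comm, ← Matrix.mul_assoc, hQP, Matrix.one_mul]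

end conj

section inter
variable {v : ℕ → Fin (d+1) → K}

lemma matA_mul_P (hv1 : ∀ i < d, (matA d θ).mulVec (v i) - θ (d - i) • v i = v (i + 1))
    (hv2 : (matA d θ).mulVec (v d) - θ 0 • v d = 0) :
    matA d θ * (Matrix.of fun i j : Fin (d+1) => v (j:ℕ) i)
      = (Matrix.of fun i j : Fin (d+1) => v (j:ℕ) i)
          * lbd d (fun k => θ (d - k)) (fun _ => 1) := by
  ext i j
  have hL : (matA d θ * (Matrix.of fun i j : Fin (d+1) => v (j:ℕ) i)) i j
      = (matA d θ).mulVec (v (j:ℕ)) i := rfl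
  rw [hL, mul_lbd_entry]
  by_cases hj : (j:ℕ) < d
  · rw [dif_pos hj]
    have h1 := congrFun (hv1 (j:ℕ) hj) i
    simp only [Pi.sub_apply, Pi.smul_apply, smul_eq_mul] at h1
    have h2 : (Matrix.of fun i j : Fin (d+1) => v (j:ℕ) i) i ⟨(j:ℕ)+1, by omega⟩
        = v ((j:ℕ)+1) i := rfl
    have h3 : (Matrix.of fun i j : Fin (d+1) => v (j:ℕ) i) i j = v (j:ℕ) i := rfl
    rw [h2, h3]
    linear_combination h1
  · rw [dif_neg hj]
    have hjd : (j:ℕ) = d := by omega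
    have h1 := congrFun hv2 i
    simp only [Pi.sub_apply, Pi.smul_apply, smul_eq_mul, Pi.zero_apply] at h1
    have h3 : (Matrix.of fun i j : Fin (d+1) => v (j:ℕ) i) i j = v (j:ℕ) i := rfl
    rw [h3, hjd]
    have hdd : d - d = 0 := by omega
    rw [hdd]
    linear_combination h1

lemma matAs_mul_P {θs φ ϕ : ℕ → K}
    (hv3 : ∀ i, 1 ≤ i → i ≤ d →
      (matAs d θs φ).mulVec (v i) - θs i • v i = ϕ i • v (i - 1))
    (hv4 : (matAs d θs φ).mulVec (v 0) - θs 0 • v 0 = 0) :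
    matAs d θs φ * (Matrix.of fun i j : Fin (d+1) => v (j:ℕ) i)
      = (Matrix.of fun i j : Fin (d+1) => v (j:ℕ) i) * (lbd d θs ϕ)ᵀ := by
  ext i j
  have hL : (matAs d θs φ * (Matrix.of fun i j : Fin (d+1) => v (j:ℕ) i)) i j
      = (matAs d θs φ).mulVec (v (j:ℕ)) i := rfl
  have hR : ((Matrix.of fun i j : Fin (d+1) => v (j:ℕ) i) * (lbd d θs ϕ)ᵀ) i j
      = (lbd d θs ϕ * (Matrix.of fun k l : Fin (d+1) => v (k:ℕ) l)) j i := by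
    rw [Matrix.mul_apply, Matrix.mul_apply]
    exact Finset.sum_congr rfl fun k _ => by
      show v (k:ℕ) i * lbd d θs ϕ j k = lbd d θs ϕ j k * v (k:ℕ) i
      ring
  rw [hL, hR, lbd_mul_entry]
  have h3 : (Matrix.of fun k l : Fin (d+1) => v (k:ℕ) l) j i = v (j:ℕ) i := rfl
  by_cases hj : 0 < (j:ℕ)
  · rw [dif_pos hj]
    have h1 := congrFun (hv3 (j:ℕ) (by omega) (by omega)) i
    simp only [Pi.sub_apply, Pi.smul_apply, smul_eq_mul] at h1
    have h2 : (Matrix.of fun k l : Fin (d+1) => v (k:ℕ) l) ⟨(j:ℕ)-1, by omega⟩ i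
        = v ((j:ℕ)-1) i := rfl
    rw [h2, h3]
    linear_combination h1
  · rw [dif_neg hj]
    have hj0 : (j:ℕ) = 0 := by omega
    have h1 := congrFun hv4 i
    simp only [Pi.sub_apply, Pi.smul_apply, smul_eq_mul, Pi.zero_apply] at h1
    rw [h3, hj0]
    linear_combination h1

end inter

lemma prod_range_shift (f : ℕ → K) (d : ℕ) :
    ∏ k ∈ Finset.range d, f (k+1) = ∏ k ∈ Finset.Icc 1 d, f k := by
  refine Finset.prod_nbij' (fun k => k+1) (fun k => k-1) ?_ ?_ ?_ ?_ ?_ <;>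
    intro a ha <;> simp only [Finset.mem_range, Finset.mem_Icc] at * <;> omega

lemma prod_flip (f : ℕ → K) (d : ℕ) :
    ∏ k ∈ Finset.range d, f (d - k) = ∏ k ∈ Finset.Icc 1 d, f k := by
  refine Finset.prod_nbij' (fun k => d - k) (fun k => d - k) ?_ ?_ ?_ ?_ ?_ <;>
    intro a ha <;> simp only [Finset.mem_range, Finset.mem_Icc] at * <;> omega

lemma prod_Icc_flip (f : ℕ → K) (d : ℕ) :
    ∏ k ∈ Finset.Icc 1 d, f (d - k) = ∏ k ∈ Finset.range d, f k := by
  refine Finset.prod_nbij' (fun k => d - k) (fun k => d - k) ?_ ?_ ?_ ?_ ?_ <;>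
    intro a ha <;> simp only [Finset.mem_range, Finset.mem_Icc] at * <;> omega

lemma uvec_closed (θ s : ℕ → K) (n : ℕ) :
    uvec θ s n = (∏ k ∈ Finset.Icc 1 n, s k) * (∏ k ∈ Finset.Icc 1 n, (θ 0 - θ k))⁻¹ := by
  rw [uvec, ← Finset.prod_inv_distrib, ← Finset.prod_mul_distrib]

lemma wvec_closed (d : ℕ) (θ s : ℕ → K) (n : ℕ) :
    wvec d θ s n
      = (∏ k ∈ Finset.range n, (θ d - θ k)) * (∏ k ∈ Finset.range n, s (k+1))⁻¹ := by
  rw [wvec, ← Finset.prod_inv_distrib, ← Finset.prod_mul_distrib]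

lemma wvec_zero (d : ℕ) (θ s : ℕ → K) : wvec d θ s 0 = 1 := by simp [wvec]
lemma flip_theta_prod (θ : ℕ → K) (d : ℕ) :
    ∏ k ∈ Finset.Icc 1 d, (θ d - θ (d - k)) = ∏ k ∈ Finset.range d, (θ d - θ k) :=
  prod_Icc_flip (fun j => θ d - θ j) d

lemma flip_eta_prod (θ : ℕ → K) (d : ℕ) :
    ∏ k ∈ Finset.range d, (θ 0 - θ (d - k)) = ∏ k ∈ Finset.Icc 1 d, (θ 0 - θ k) :=
  prod_flip (fun j => θ 0 - θ j) d

end FourIdem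

open FourIdem

theorem four_idempotent_products {K : Type*} [Field K] (d : ℕ) (θ θs φ ϕ : ℕ → K)
    (hθ : ∀ i ≤ d, ∀ j ≤ d, θ i = θ j → i = j)
    (hθs : ∀ i ≤ d, ∀ j ≤ d, θs i = θs j → i = j)
    (hφ : ∀ i, 1 ≤ i → i ≤ d → φ i ≠ 0)
    (hE0 : ∀ i ≤ d, ∀ j ≤ d, 1 < |(i : ℤ) - (j : ℤ)| →
      primIdem d θ (matA d θ) i * matAs d θs φ * primIdem d θ (matA d θ) j = 0)
    (hE1 : ∀ i ≤ d, ∀ j ≤ d, |(i : ℤ) - (j : ℤ)| = 1 →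
      primIdem d θ (matA d θ) i * matAs d θs φ * primIdem d θ (matA d θ) j ≠ 0)
    (hEs0 : ∀ i ≤ d, ∀ j ≤ d, 1 < |(i : ℤ) - (j : ℤ)| →
      primIdem d θs (matAs d θs φ) i * matA d θ * primIdem d θs (matAs d θs φ) j = 0)
    (hEs1 : ∀ i ≤ d, ∀ j ≤ d, |(i : ℤ) - (j : ℤ)| = 1 →
      primIdem d θs (matAs d θs φ) i * matA d θ * primIdem d θs (matAs d θs φ) j ≠ 0)
    (hϕ : ∀ i, 1 ≤ i → i ≤ d → ϕ i ≠ 0)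
    (v : ℕ → Fin (d + 1) → K)
    (hvli : LinearIndependent K fun i : Fin (d + 1) => v (i : ℕ))
    (hvsp : Submodule.span K (Set.range fun i : Fin (d + 1) => v (i : ℕ)) = ⊤)
    (hv1 : ∀ i < d, (matA d θ).mulVec (v i) - θ (d - i) • v i = v (i + 1))
    (hv2 : (matA d θ).mulVec (v d) - θ 0 • v d = 0)
    (hv3 : ∀ i, 1 ≤ i → i ≤ d →
      (matAs d θs φ).mulVec (v i) - θs i • v i = ϕ i • v (i - 1))
    (hv4 : (matAs d θs φ).mulVec (v 0) - θs 0 • v 0 = 0) :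
    (primIdem d θs (matAs d θs φ) 0 * primIdem d θ (matA d θ) d * primIdem d θs (matAs d θs φ) d * primIdem d θ (matA d θ) 0 = ((∏ k ∈ Finset.Icc (1) (d), φ k) / ((tauPoly θ d).eval (θ d) * (tauPoly θs d).eval (θs d))) • (primIdem d θs (matAs d θs φ) 0 * primIdem d θ (matA d θ) 0))
    ∧ (primIdem d θs (matAs d θs φ) 0 * primIdem d θ (matA d θ) 0 * primIdem d θs (matAs d θs φ) d * primIdem d θ (matA d θ) d = ((∏ k ∈ Finset.Icc (1) (d), ϕ k) / ((etaPoly d θ d).eval (θ 0) * (tauPoly θs d).eval (θs d))) • (primIdem d θs (matAs d θs φ) 0 * primIdem d θ (matA d θ) d))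
    ∧ (primIdem d θs (matAs d θs φ) d * primIdem d θ (matA d θ) d * primIdem d θs (matAs d θs φ) 0 * primIdem d θ (matA d θ) 0 = ((∏ k ∈ Finset.Icc (1) (d), ϕ k) / ((tauPoly θ d).eval (θ d) * (etaPoly d θs d).eval (θs 0))) • (primIdem d θs (matAs d θs φ) d * primIdem d θ (matA d θ) 0))
    ∧ (primIdem d θs (matAs d θs φ) d * primIdem d θ (matA d θ) 0 * primIdem d θs (matAs d θs φ) 0 * primIdem d θ (matA d θ) d = ((∏ k ∈ Finset.Icc (1) (d), φ k) / ((etaPoly d θ d).eval (θ 0) * (etaPoly d θs d).eval (θs 0))) • (primIdem d θs (matAs d θs φ) d * primIdem d θ (matA d θ) d)) := by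
  classical
  clear hE0 hE1 hEs0 hEs1
  have hone : ∀ k : ℕ, 1 ≤ k → k ≤ d → (fun _ : ℕ => (1:K)) k ≠ 0 := fun _ _ _ => one_ne_zero
  have hθ'' : ∀ i ≤ d, ∀ j ≤ d,
      (fun k => θ (d - k)) i = (fun k => θ (d - k)) j → i = j := by
    intro i hi j hj h
    have := hθ (d - i) (by omega) (d - j) (by omega) h
    omega
  -- e-basis explicit forms
  have heE0 : primIdem d θ (matA d θ) 0
      = outer (fun i => uvec θ (fun _ => 1) (i:ℕ)) (fun j => if (j:ℕ) = 0 then 1 else 0) :=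
    primIdem_lbd_zero hθ hone
  have heEd : primIdem d θ (matA d θ) d
      = outer (fun i => if (i:ℕ) = d then 1 else 0)
          (fun j => wvec d θ (fun _ => 1) (j:ℕ) * (wvec d θ (fun _ => 1) d)⁻¹) :=
    primIdem_lbd_d hθ hone
  have heEs0 : primIdem d θs (matAs d θs φ) 0
      = outer (fun i => if (i:ℕ) = 0 then 1 else 0) (fun j => uvec θs φ (j:ℕ)) := by
    rw [matAs_eq_lbd, primIdem_transpose, primIdem_lbd_zero hθs hφ, outer_transpose]
  have heEsd : primIdem d θs (matAs d θs φ) d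
      = outer (fun i => wvec d θs φ (i:ℕ) * (wvec d θs φ d)⁻¹)
          (fun j => if (j:ℕ) = d then 1 else 0) := by
    rw [matAs_eq_lbd, primIdem_transpose, primIdem_lbd_d hθs hφ, outer_transpose]
  -- change of basis
  have hspan : ⊤ ≤ Submodule.span K (Set.range fun i : Fin (d+1) => v (i:ℕ)) := hvsp.ge
  set bV : Module.Basis (Fin (d+1)) K (Fin (d+1) → K) := Module.Basis.mk hvli hspan with hbV
  set e : Module.Basis (Fin (d+1)) K (Fin (d+1) → K) := Pi.basisFun K (Fin (d+1)) with he
  set P' := e.toMatrix (fun i : Fin (d+1) => v (i:ℕ)) with hP'def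
  set Q := bV.toMatrix ⇑e with hQdef
  have hcoe : ⇑bV = fun i : Fin (d+1) => v (i:ℕ) := Module.Basis.coe_mk _ _
  have hP'b : e.toMatrix ⇑bV = P' := by rw [hcoe]
  have hPQ : P' * Q = 1 := by
    rw [← hP'b, hQdef]; exact Module.Basis.toMatrix_mul_toMatrix_flip e bV
  have hQP : Q * P' = 1 := by
    rw [← hP'b, hQdef]; exact Module.Basis.toMatrix_mul_toMatrix_flip bV e
  have hPm : P' = Matrix.of (fun i j : Fin (d+1) => v (j:ℕ) i) := by
    ext i j
    rw [hP'def, Module.Basis.toMatrix_apply, he, Pi.basisFun_repr]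
    rfl
  have hAconj : matA d θ = P' * lbd d (fun k => θ (d - k)) (fun _ => 1) * Q := by
    have hAP := matA_mul_P hv1 hv2
    calc matA d θ = matA d θ * (P' * Q) := by rw [hPQ, Matrix.mul_one]
      _ = (matA d θ * P') * Q := by rw [Matrix.mul_assoc]
      _ = P' * lbd d (fun k => θ (d - k)) (fun _ => 1) * Q := by rw [hPm, hAP]
  have hAsconj : matAs d θs φ = P' * (lbd d θs ϕ)ᵀ * Q := by
    have hAsP := matAs_mul_P hv3 hv4
    calc matAs d θs φ = matAs d θs φ * (P' * Q) := by rw [hPQ, Matrix.mul_one]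
      _ = (matAs d θs φ * P') * Q := by rw [Matrix.mul_assoc]
      _ = P' * (lbd d θs ϕ)ᵀ * Q := by rw [hPm, hAsP]
  -- v-basis conjugated forms
  have hG0 : primIdem d θ (matA d θ) 0
      = P' * outer (fun i => if (i:ℕ) = d then 1 else 0)
          (fun j => wvec d (fun k => θ (d - k)) (fun _ => 1) (j:ℕ)
            * (wvec d (fun k => θ (d - k)) (fun _ => 1) d)⁻¹) * Q := by
    rw [hAconj, primIdem_conj hPQ hQP, primIdem_flip (Nat.zero_le d), Nat.sub_zero,
      primIdem_lbd_d hθ'' hone]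
  have hGd : primIdem d θ (matA d θ) d
      = P' * outer (fun i => uvec (fun k => θ (d - k)) (fun _ => 1) (i:ℕ))
          (fun j => if (j:ℕ) = 0 then 1 else 0) * Q := by
    rw [hAconj, primIdem_conj hPQ hQP, primIdem_flip (le_refl d), Nat.sub_self,
      primIdem_lbd_zero hθ'' hone]
  have hGs0 : primIdem d θs (matAs d θs φ) 0
      = P' * outer (fun i => if (i:ℕ) = 0 then 1 else 0) (fun j => uvec θs ϕ (j:ℕ)) * Q := by
    rw [hAsconj, primIdem_conj hPQ hQP, primIdem_transpose, primIdem_lbd_zero hθs hϕ,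
      outer_transpose]
  have hGsd : primIdem d θs (matAs d θs φ) d
      = P' * outer (fun i => wvec d θs ϕ (i:ℕ) * (wvec d θs ϕ d)⁻¹)
          (fun j => if (j:ℕ) = d then 1 else 0) * Q := by
    rw [hAsconj, primIdem_conj hPQ hQP, primIdem_transpose, primIdem_lbd_d hθs hϕ,
      outer_transpose]
    -- trace identities
  have key00 : (∑ k : Fin (d+1), uvec θs φ (k:ℕ) * uvec θ (fun _ => 1) (k:ℕ))
      = uvec θs ϕ d * (wvec d (fun k => θ (d - k)) (fun _ => 1) d)⁻¹ := by
    have t1 : Matrix.trace (primIdem d θs (matAs d θs φ) 0 * primIdem d θ (matA d θ) 0)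
        = (∑ k : Fin (d+1), uvec θs φ (k:ℕ) * uvec θ (fun _ => 1) (k:ℕ)) := by
      rw [heEs0, heE0, outer_mul, Matrix.trace_smul, trace_outer, smul_eq_mul,
        sum_delta_mul (fun k : Fin (d+1) => if (k:ℕ) = 0 then (1:K) else 0) 0 (by omega)]
      norm_num
    have t2 : Matrix.trace (primIdem d θs (matAs d θs φ) 0 * primIdem d θ (matA d θ) 0)
        = uvec θs ϕ d * (wvec d (fun k => θ (d - k)) (fun _ => 1) d)⁻¹ := by
      rw [hGs0, hG0, trace_conj_mul hQP, outer_mul, Matrix.trace_smul, trace_outer,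
        smul_eq_mul,
        sum_mul_delta (fun k : Fin (d+1) => uvec θs ϕ (k:ℕ)) d (by omega),
        sum_delta_mul (fun k : Fin (d+1) => wvec d (fun k => θ (d - k)) (fun _ => 1) (k:ℕ)
          * (wvec d (fun k => θ (d - k)) (fun _ => 1) d)⁻¹) 0 (by omega)]
      norm_num [wvec_zero]
    rw [← t1, t2]
  have keydd : (∑ k : Fin (d+1), (wvec d θ (fun _ => 1) (k:ℕ) * (wvec d θ (fun _ => 1) d)⁻¹)
        * (wvec d θs φ (k:ℕ) * (wvec d θs φ d)⁻¹))
      = (wvec d θs ϕ d)⁻¹ * uvec (fun k => θ (d - k)) (fun _ => 1) d := by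
    have t1 : Matrix.trace (primIdem d θ (matA d θ) d * primIdem d θs (matAs d θs φ) d)
        = (∑ k : Fin (d+1), (wvec d θ (fun _ => 1) (k:ℕ) * (wvec d θ (fun _ => 1) d)⁻¹)
            * (wvec d θs φ (k:ℕ) * (wvec d θs φ d)⁻¹)) := by
      rw [heEd, heEsd, outer_mul, Matrix.trace_smul, trace_outer, smul_eq_mul,
        sum_delta_mul (fun k : Fin (d+1) => if (k:ℕ) = d then (1:K) else 0) d (by omega)]
      norm_num
    have t2 : Matrix.trace (primIdem d θ (matA d θ) d * primIdem d θs (matAs d θs φ) d)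
        = (wvec d θs ϕ d)⁻¹ * uvec (fun k => θ (d - k)) (fun _ => 1) d := by
      rw [hGd, hGsd, trace_conj_mul hQP, outer_mul, Matrix.trace_smul, trace_outer,
        smul_eq_mul,
        sum_delta_mul (fun k : Fin (d+1) => wvec d θs ϕ (k:ℕ) * (wvec d θs ϕ d)⁻¹) 0
          (by omega),
        sum_mul_delta (fun k : Fin (d+1) => uvec (fun k => θ (d - k)) (fun _ => 1) (k:ℕ)) d
          (by omega)]
      norm_num [wvec_zero]
    rw [← t1, t2]
  -- closed forms of scalars
  have hUs : uvec θs φ d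
      = (∏ k ∈ Finset.Icc 1 d, φ k) * (∏ k ∈ Finset.Icc 1 d, (θs 0 - θs k))⁻¹ :=
    uvec_closed θs φ d
  have hU : uvec θ (fun _ => 1) d = (∏ k ∈ Finset.Icc 1 d, (θ 0 - θ k))⁻¹ := by
    rw [uvec_closed]; simp
  have hW : wvec d θ (fun _ => 1) d = ∏ k ∈ Finset.range d, (θ d - θ k) := by
    rw [wvec_closed]; simp
  have hWs : wvec d θs φ d
      = (∏ k ∈ Finset.range d, (θs d - θs k)) * (∏ k ∈ Finset.Icc 1 d, φ k)⁻¹ := by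
    rw [wvec_closed, prod_range_shift]
  have hU' : uvec (fun k => θ (d - k)) (fun _ => 1) d
      = (∏ k ∈ Finset.range d, (θ d - θ k))⁻¹ := by
    have h1 : ∏ k ∈ Finset.Icc 1 d, ((fun k => θ (d - k)) 0 - (fun k => θ (d - k)) k)
        = ∏ k ∈ Finset.range d, (θ d - θ k) := by
      simp only
      rw [Nat.sub_zero]
      exact flip_theta_prod θ d
    rw [uvec_closed, h1]; simp
  have hW' : wvec d (fun k => θ (d - k)) (fun _ => 1) d
      = ∏ k ∈ Finset.Icc 1 d, (θ 0 - θ k) := by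
    have h1 : ∏ k ∈ Finset.range d, ((fun k => θ (d - k)) d - (fun k => θ (d - k)) k)
        = ∏ k ∈ Finset.Icc 1 d, (θ 0 - θ k) := by
      simp only
      rw [Nat.sub_self]
      exact flip_eta_prod θ d
    rw [wvec_closed, h1]; simp
  have hUs' : uvec θs ϕ d
      = (∏ k ∈ Finset.Icc 1 d, ϕ k) * (∏ k ∈ Finset.Icc 1 d, (θs 0 - θs k))⁻¹ :=
    uvec_closed θs ϕ d
  have hWs' : wvec d θs ϕ d
      = (∏ k ∈ Finset.range d, (θs d - θs k)) * (∏ k ∈ Finset.Icc 1 d, ϕ k)⁻¹ := by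
    rw [wvec_closed, prod_range_shift]
  -- polynomial evaluations
  have hTau : (tauPoly θ d).eval (θ d) = ∏ k ∈ Finset.range d, (θ d - θ k) := by
    simp [tauPoly, eval_prod]
  have hTaus : (tauPoly θs d).eval (θs d) = ∏ k ∈ Finset.range d, (θs d - θs k) := by
    simp [tauPoly, eval_prod]
  have hEta : (etaPoly d θ d).eval (θ 0) = ∏ k ∈ Finset.Icc 1 d, (θ 0 - θ k) := by
    rw [etaPoly, eval_prod]
    simp only [eval_sub, eval_X, eval_C]
    exact flip_eta_prod θ d
  have hEtas : (etaPoly d θs d).eval (θs 0) = ∏ k ∈ Finset.Icc 1 d, (θs 0 - θs k) := by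
    rw [etaPoly, eval_prod]
    simp only [eval_sub, eval_X, eval_C]
    exact flip_eta_prod θs d
  -- nonvanishing
  have hTa0 : (∏ k ∈ Finset.range d, (θ d - θ k)) ≠ 0 :=
    Finset.prod_ne_zero_iff.mpr fun k hk =>
      theta_ne hθ le_rfl (le_of_lt (Finset.mem_range.mp hk))
        (by have := Finset.mem_range.mp hk; omega)
  have hTas0 : (∏ k ∈ Finset.range d, (θs d - θs k)) ≠ 0 :=
    Finset.prod_ne_zero_iff.mpr fun k hk =>
      theta_ne hθs le_rfl (le_of_lt (Finset.mem_range.mp hk))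
        (by have := Finset.mem_range.mp hk; omega)
  have hEa0 : (∏ k ∈ Finset.Icc 1 d, (θ 0 - θ k)) ≠ 0 :=
    Finset.prod_ne_zero_iff.mpr fun k hk =>
      theta_ne hθ (Nat.zero_le d) (Finset.mem_Icc.mp hk).2
        (by have := (Finset.mem_Icc.mp hk).1; omega)
  have hEas0 : (∏ k ∈ Finset.Icc 1 d, (θs 0 - θs k)) ≠ 0 :=
    Finset.prod_ne_zero_iff.mpr fun k hk =>
      theta_ne hθs (Nat.zero_le d) (Finset.mem_Icc.mp hk).2
        (by have := (Finset.mem_Icc.mp hk).1; omega)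
  have hPφ0 : (∏ k ∈ Finset.Icc 1 d, φ k) ≠ 0 :=
    Finset.prod_ne_zero_iff.mpr fun k hk =>
      hφ k (Finset.mem_Icc.mp hk).1 (Finset.mem_Icc.mp hk).2
  have hPϕ0 : (∏ k ∈ Finset.Icc 1 d, ϕ k) ≠ 0 :=
    Finset.prod_ne_zero_iff.mpr fun k hk =>
      hϕ k (Finset.mem_Icc.mp hk).1 (Finset.mem_Icc.mp hk).2
  refine ⟨?_, ?_, ?_, ?_⟩
  · rw [heEs0, heEd, heEsd, heE0]
    simp only [outer_mul, Matrix.smul_mul, smul_smul]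
    congr 1
    rw [sum_mul_delta (fun k : Fin (d+1) => uvec θs φ (k:ℕ)) d (by omega),
      sum_delta_mul (fun k : Fin (d+1) => uvec θ (fun _ => (1:K)) (k:ℕ)) d (by omega),
      keydd, key00]
    norm_num
    rw [hUs, hU, hU', hWs', hUs', hW', hTau, hTaus]
    field_simp
  · rw [heEs0, heEd, heEsd, heE0]
    simp only [outer_mul, Matrix.smul_mul, smul_smul]
    congr 1
    rw [sum_delta_mul (fun k : Fin (d+1) => wvec d θs φ (k:ℕ) * (wvec d θs φ d)⁻¹) 0
        (by omega),
      sum_delta_mul (fun k : Fin (d+1) => if (k:ℕ) = d then (1:K) else 0) d (by omega),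
      sum_mul_delta (fun k : Fin (d+1) => uvec θs φ (k:ℕ)) d (by omega),
      key00]
    norm_num [wvec_zero]
    rw [hUs, hWs, hUs', hW', hEta, hTaus]
    field_simp
  · rw [heEs0, heEd, heEsd, heE0]
    simp only [outer_mul, Matrix.smul_mul, smul_smul]
    congr 1
    rw [sum_delta_mul (fun k : Fin (d+1) => if (k:ℕ) = d then (1:K) else 0) d (by omega)]
    rw [sum_mul_delta (fun k : Fin (d+1) => wvec d θ (fun _ => (1:K)) (k:ℕ)
          * (wvec d θ (fun _ => (1:K)) d)⁻¹) 0 (by omega)]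
    rw [sum_delta_mul (fun k : Fin (d+1) => uvec θ (fun _ => (1:K)) (k:ℕ)) d (by omega),
      key00]
    norm_num [wvec_zero]
    rw [hU, hW, hUs', hW', hTau, hEtas]
    field_simp
    try ring
    try exact Or.inl trivial
  · rw [heEs0, heEd, heEsd, heE0]
    simp only [outer_mul, Matrix.smul_mul, smul_smul]
    congr 1
    have hd00 : (∑ k : Fin (d+1), (if (k:ℕ) = 0 then (1:K) else 0)
        * (if (k:ℕ) = 0 then (1:K) else 0)) = 1 := by
      rw [sum_delta_mul (fun k : Fin (d+1) => if (k:ℕ) = 0 then (1:K) else 0) 0 (by omega)]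
      norm_num
    rw [sum_delta_mul (fun k : Fin (d+1) => uvec θ (fun _ => (1:K)) (k:ℕ)) d (by omega),
      sum_delta_mul (fun k : Fin (d+1) => if (k:ℕ) = d then (1:K) else 0) d (by omega),
      sum_mul_delta (fun k : Fin (d+1) => uvec θs φ (k:ℕ)) d (by omega), hd00]
    norm_num
    rw [hUs, hU, hEta, hEtas]
    field_simp
    try ring
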